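/- The Gumbel location-family random utility model yields exactly the Plackett-Luce probabilities: let λ_1,…,λ_m > 0, let θ_j = log λ_j, and let f_j(x) = exp(−(x−θ_j)) · exp(−exp(−(x−θ_j))) be the Gumbel density with location θ_j. Then for every permutation π of {1,…,m}, ∫_{A_π} ∏_{j=1}^m f_j(x_j) dx = ∏_{j=1}^m λ_{π(j)} / ∑_{j′=j}^m λ_{π(j′)}, where A_π = {x ∈ ℝ^m : x_{π(1)} > x_{π(2)} > ⋯ > x_{π(m)}}. -/

import Mathlib

open MeasureTheory Set Filter Topology
open scoped ENNReal

noncomputable def gum (μ t : ℝ) : ℝ := μ * Real.exp (-t) * Real.exp (-(μ * Real.exp (-t)))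

lemma gum_nonneg (μ t : ℝ) (hμ : 0 ≤ μ) : 0 ≤ gum μ t := by
  unfold gum; positivity

lemma gum_cont (μ : ℝ) : Continuous (gum μ) := by
  unfold gum; continuity

lemma gum_hasDeriv (μ t : ℝ) :
    HasDerivAt (fun t => Real.exp (-(μ * Real.exp (-t)))) (gum μ t) t := by
  have h1 : HasDerivAt (fun t : ℝ => -t) (-1) t := (hasDerivAt_id t).neg
  have h2 : HasDerivAt (fun t : ℝ => Real.exp (-t)) (Real.exp (-t) * (-1)) t :=
    (Real.hasDerivAt_exp (-t)).comp t h1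
  have h3 : HasDerivAt (fun t : ℝ => -(μ * Real.exp (-t)))
      (-(μ * (Real.exp (-t) * (-1)))) t := ((h2.const_mul μ)).neg
  have h4 := h3.exp
  convert h4 using 1
  unfold gum; ring

lemma gum_le_exp (μ t : ℝ) (hμ : 0 < μ) : gum μ t ≤ 4 / μ * Real.exp t := by
  set s := Real.exp (-t) with hs
  have hspos : 0 < s := Real.exp_pos _
  have hset : Real.exp t = 1 / s := by
    rw [eq_div_iff hspos.ne', hs, ← Real.exp_add]
    simp
  have hx : 0 ≤ μ * s := by positivity
  -- (μ s)^2 ≤ 4 exp (μ s)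
  have key : (μ * s) ^ 2 ≤ 4 * Real.exp (μ * s) := by
    have h1 : μ * s / 2 + 1 ≤ Real.exp (μ * s / 2) := Real.add_one_le_exp _
    have h2 : Real.exp (μ * s) = Real.exp (μ * s / 2) ^ 2 := by
      rw [← Real.exp_nat_mul]; ring_nf
    nlinarith [Real.exp_pos (μ * s / 2)]
  have hexp : Real.exp (-(μ * s)) = 1 / Real.exp (μ * s) := by
    rw [Real.exp_neg]; simp
  unfold gum
  rw [← hs, hexp, hset]
  rw [mul_one_div, mul_one_div, div_le_div_iff₀ (Real.exp_pos _) hspos]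
  rw [div_mul_eq_mul_div, le_div_iff₀ hμ]
  nlinarith [key]


lemma gum_le_exp_neg (μ t : ℝ) (hμ : 0 ≤ μ) : gum μ t ≤ μ * Real.exp (-t) := by
  unfold gum
  have h1 : Real.exp (-(μ * Real.exp (-t))) ≤ 1 :=
    Real.exp_le_one_iff.2 (neg_nonpos.2 (by positivity))
  have := mul_le_mul_of_nonneg_left h1 (by positivity : (0:ℝ) ≤ μ * Real.exp (-t))
  simpa using this

lemma gum_integrable (μ : ℝ) (hμ : 0 < μ) : Integrable (gum μ) := by
  rw [← integrableOn_univ, ← Set.Iic_union_Ioi (a := (0:ℝ))]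
  apply IntegrableOn.union
  · apply Integrable.mono' ((integrableOn_exp_Iic 0).const_mul (4/μ))
      ((gum_cont μ).aestronglyMeasurable.restrict)
    filter_upwards with t
    rw [Real.norm_of_nonneg (gum_nonneg μ t hμ.le)]
    exact gum_le_exp (μ := μ) t hμ
  · apply Integrable.mono' ((exp_neg_integrableOn_Ioi 0 (one_pos)).const_mul μ)
      ((gum_cont μ).aestronglyMeasurable.restrict)
    filter_upwards with t
    rw [Real.norm_of_nonneg (gum_nonneg μ t hμ.le)]
    simpa using gum_le_exp_neg μ t hμ.le

lemma gum_integral_Iic (μ c : ℝ) (hμ : 0 < μ) :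
    ∫ t in Iic c, gum μ t = Real.exp (-(μ * Real.exp (-c))) := by
  have hbot : Tendsto (fun t => Real.exp (-(μ * Real.exp (-t)))) atBot (𝓝 0) := by
    apply Real.tendsto_exp_atBot.comp
    apply tendsto_neg_atTop_atBot.comp
    exact (Real.tendsto_exp_atTop.comp tendsto_neg_atBot_atTop).const_mul_atTop hμ
  have := integral_Iic_of_hasDerivAt_of_tendsto' (a := c)
    (fun x _ => gum_hasDeriv μ x) (gum_integrable μ hμ).integrableOn hbot
  simpa using this

lemma gum_integral_univ (μ : ℝ) (hμ : 0 < μ) : ∫ t, gum μ t = 1 := by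
  have hbot : Tendsto (fun t => Real.exp (-(μ * Real.exp (-t)))) atBot (𝓝 0) := by
    apply Real.tendsto_exp_atBot.comp
    apply tendsto_neg_atTop_atBot.comp
    exact (Real.tendsto_exp_atTop.comp tendsto_neg_atBot_atTop).const_mul_atTop hμ
  have htop : Tendsto (fun t => Real.exp (-(μ * Real.exp (-t)))) atTop (𝓝 1) := by
    have h1 : Tendsto (fun t : ℝ => -(μ * Real.exp (-t))) atTop (𝓝 0) := by
      simpa using (((Real.tendsto_exp_atBot.comp tendsto_neg_atTop_atBot).const_mul μ).neg)
    simpa [Function.comp_def] using (Real.continuous_exp.tendsto 0).comp h1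
  have := integral_of_hasDerivAt_of_tendsto (fun x => gum_hasDeriv μ x)
    (gum_integrable μ hμ) hbot htop
  simpa using this

lemma gum_lintegral_Iio (μ c : ℝ) (hμ : 0 < μ) :
    ∫⁻ t in Iio c, ENNReal.ofReal (gum μ t) =
      ENNReal.ofReal (Real.exp (-(μ * Real.exp (-c)))) := by
  rw [← ofReal_integral_eq_lintegral_ofReal (gum_integrable μ hμ).integrableOn
    (Filter.Eventually.of_forall fun t => gum_nonneg μ t hμ.le)]
  congr 1
  rw [← gum_integral_Iic μ c hμ]
  exact setIntegral_congr_set Iio_ae_eq_Iic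

lemma gum_lintegral_univ (μ : ℝ) (hμ : 0 < μ) :
    ∫⁻ t, ENNReal.ofReal (gum μ t) = 1 := by
  rw [← ofReal_integral_eq_lintegral_ofReal (gum_integrable μ hμ)
    (Filter.Eventually.of_forall fun t => gum_nonneg μ t hμ.le),
    gum_integral_univ μ hμ]
  simp
section helpers

lemma measurableSet_S {m : ℕ} :
    MeasurableSet {y : Fin m → ℝ | ∀ k l : Fin m, k < l → y l < y k} := by
  have : {y : Fin m → ℝ | ∀ k l : Fin m, k < l → y l < y k}
      = ⋂ (k : Fin m) (l : Fin m) (_ : k < l), {y | y l < y k} := by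
    ext y; simp [Set.mem_iInter]
  rw [this]
  exact MeasurableSet.iInter fun k => MeasurableSet.iInter fun l => MeasurableSet.iInter
    fun _ => measurableSet_lt (measurable_pi_apply l) (measurable_pi_apply k)

lemma snoc_mem_S {n : ℕ} (z : Fin n → ℝ) (t : ℝ) :
    (∀ k l : Fin (n+1), k < l → (Fin.snoc z t : Fin (n+1) → ℝ) l < (Fin.snoc z t : Fin (n+1) → ℝ) k) ↔
      ((∀ k l : Fin n, k < l → z l < z k) ∧ ∀ i, t < z i) := by
  constructor
  · intro h
    refine ⟨fun k l hkl => ?_, fun i => ?_⟩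
    · have := h k.castSucc l.castSucc (by simpa using hkl)
      simpa [Fin.snoc_castSucc] using this
    · have := h i.castSucc (Fin.last n) (Fin.castSucc_lt_last i)
      simpa [Fin.snoc_castSucc, Fin.snoc_last] using this
  · rintro ⟨h1, h2⟩ k l hkl
    induction l using Fin.lastCases with
    | last =>
      induction k using Fin.lastCases with
      | last => exact absurd hkl (lt_irrefl _)
      | cast k => simpa [Fin.snoc_castSucc, Fin.snoc_last] using h2 k
    | cast l =>
      induction k using Fin.lastCases with
      | last => exact absurd hkl (Fin.castSucc_lt_last l).asymm
      | cast k => simpa [Fin.snoc_castSucc] using h1 k l (by simpa using hkl)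

lemma gum_mul_exp (a b x : ℝ) (ha : 0 < a) (hb : 0 < b) :
    gum a x * Real.exp (-(b * Real.exp (-x))) = (a / (a + b)) * gum (a + b) x := by
  have hab : a + b ≠ 0 := by positivity
  unfold gum
  rw [mul_assoc, ← Real.exp_add,
    show -(a * Real.exp (-x)) + -(b * Real.exp (-x)) = -((a + b) * Real.exp (-x)) by ring]
  field_simp

end helpers

lemma merge_prod (k : ℕ) (ν : Fin (k+1) → ℝ) (b : ℝ) (hν : ∀ i, 0 < ν i) (hb : 0 < b)
    (z : Fin (k+1) → ℝ) :
    (∏ i, gum (ν i) (z i)) * Real.exp (-(b * Real.exp (-(z (Fin.last k))))) =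
      (ν (Fin.last k) / (ν (Fin.last k) + b)) *
        ∏ i, gum (Function.update ν (Fin.last k) (ν (Fin.last k) + b) i) (z i) := by
  rw [Fin.prod_univ_castSucc, Fin.prod_univ_castSucc (f := fun i =>
    gum (Function.update ν (Fin.last k) (ν (Fin.last k) + b) i) (z i))]
  have h1 : ∀ i : Fin k, Function.update ν (Fin.last k) (ν (Fin.last k) + b) i.castSucc
      = ν i.castSucc := fun i => Function.update_of_ne (Fin.castSucc_lt_last i).ne _ _
  simp only [h1, Function.update_self]
  rw [mul_assoc, gum_mul_exp _ _ _ (hν _) hb]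
  ring

lemma sum_Ici_eq {N : ℕ} (i : Fin N) (f : Fin N → ℝ) :
    ∑ j ∈ Finset.Ici i, f j = ∑ j, if i ≤ j then f j else 0 := by
  rw [← Finset.sum_filter]
  congr 1
  ext j; simp

lemma sum_Ici_last {N : ℕ} (f : Fin (N+1) → ℝ) :
    ∑ j ∈ Finset.Ici (Fin.last N), f j = f (Fin.last N) := by
  rw [sum_Ici_eq]
  simp_rw [Fin.last_le_iff]
  rw [Finset.sum_ite_eq' Finset.univ (Fin.last N) f]
  simp

lemma PL_step (k : ℕ) (μ : Fin (k+2) → ℝ) (hμ : ∀ j, 0 < μ j) :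
    (μ (Fin.last k).castSucc / (μ (Fin.last k).castSucc + μ (Fin.last (k+1)))) *
      ∏ i : Fin (k+1), (Function.update (fun i : Fin (k+1) => μ i.castSucc) (Fin.last k)
          (μ (Fin.last k).castSucc + μ (Fin.last (k+1))) i /
        ∑ j ∈ Finset.Ici i, Function.update (fun i : Fin (k+1) => μ i.castSucc) (Fin.last k)
          (μ (Fin.last k).castSucc + μ (Fin.last (k+1))) j) =
    ∏ j : Fin (k+2), μ j / ∑ j' ∈ Finset.Ici j, μ j' := by
  set μL := μ (Fin.last (k+1)) with hμLdef
  set a := μ (Fin.last k).castSucc with hadef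
  set upd := Function.update (fun i : Fin (k+1) => μ i.castSucc) (Fin.last k) (a + μL)
    with hupddef
  have hupd : ∀ j, upd j = μ j.castSucc + (if j = Fin.last k then μL else 0) := by
    intro j; by_cases hj : j = Fin.last k
    · subst hj; simp [hupddef, hadef]
    · simp [hupddef, Function.update_of_ne hj, hj]
  have hsum : ∀ i : Fin (k+1),
      ∑ j ∈ Finset.Ici i, upd j = ∑ j ∈ Finset.Ici i.castSucc, μ j := by
    intro i
    rw [sum_Ici_eq, sum_Ici_eq,
      Fin.sum_univ_castSucc (f := fun j : Fin (k+2) => if i.castSucc ≤ j then μ j else 0)]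
    simp only [Fin.castSucc_le_castSucc_iff]
    rw [if_pos (Fin.le_last _)]
    have hsplit : ∀ j : Fin (k+1),
        (if i ≤ j then upd j else 0)
          = (if i ≤ j then μ j.castSucc else 0) + (if j = Fin.last k then μL else 0) := by
      intro j
      by_cases h : i ≤ j
      · by_cases hj : j = Fin.last k <;> simp [hupd, h, hj, Fin.le_last]
      · have hj : j ≠ Fin.last k := by
          rintro rfl; exact h (Fin.le_last i)
        simp [h, hj]
    simp_rw [hsplit]
    rw [Finset.sum_add_distrib]
    congr 1
    rw [Finset.sum_ite_eq' Finset.univ (Fin.last k) (fun _ => μL)]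
    simp [hμLdef]
  have hupd_cast : ∀ i' : Fin k, upd i'.castSucc = μ i'.castSucc.castSucc := by
    intro i'
    exact Function.update_of_ne (Fin.castSucc_lt_last i').ne _ _
  have hsum_last : ∑ j ∈ Finset.Ici (Fin.last k).castSucc, μ j = a + μL := by
    rw [← hsum (Fin.last k), sum_Ici_last]
    simp [hupddef]
  -- split all products at the last index
  rw [Fin.prod_univ_castSucc (f := fun j : Fin (k+2) => μ j / ∑ j' ∈ Finset.Ici j, μ j'),
    Fin.prod_univ_castSucc (f := fun i : Fin (k+1) => upd i / ∑ j ∈ Finset.Ici i, upd j),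
    Fin.prod_univ_castSucc (f := fun i : Fin (k+1) =>
      μ i.castSucc / ∑ j' ∈ Finset.Ici i.castSucc, μ j')]
  simp only [hsum, hupd_cast, sum_Ici_last, Function.update_self, hsum_last]
  have h1 : a + μL ≠ 0 := by
    have := hμ (Fin.last k).castSucc
    have := hμ (Fin.last (k+1))
    rw [← hadef, ← hμLdef] at *
    positivity
  have h2 : μL ≠ 0 := (hμ _).ne'
  have h3 : upd (Fin.last k) = a + μL := by simp [hupddef]
  rw [h3, div_self h1, div_self ((hμ (Fin.last (k+1))).ne')]
  ring

lemma key_lintegral : ∀ (m : ℕ) (μ : Fin m → ℝ), (∀ j, 0 < μ j) →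
    ∫⁻ y in {y : Fin m → ℝ | ∀ k l : Fin m, k < l → y l < y k},
      ENNReal.ofReal (∏ j, gum (μ j) (y j)) =
    ENNReal.ofReal (∏ j, μ j / ∑ j' ∈ Finset.Ici j, μ j') := by
  intro m
  induction m with
  | zero =>
    intro μ _
    have hS : {y : Fin 0 → ℝ | ∀ k l : Fin 0, k < l → y l < y k} = Set.univ := by
      ext y; simp
    rw [hS, Measure.restrict_univ]
    simp [lintegral_const, volume_pi, Measure.pi_univ]
  | succ n ih =>
    intro μ hμ
    set μL := μ (Fin.last n) with hμLdef
    set f : (Fin (n+1) → ℝ) → ℝ≥0∞ :=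
      fun y => ENNReal.ofReal (∏ j, gum (μ j) (y j)) with hfdef
    have hfmeas : Measurable f := by
      apply ENNReal.measurable_ofReal.comp
      exact Finset.measurable_prod _ fun j _ =>
        (gum_cont (μ j)).measurable.comp (measurable_pi_apply j)
    set S : Set (Fin (n+1) → ℝ) := {y | ∀ k l : Fin (n+1), k < l → y l < y k} with hSdef
    set Sn : Set (Fin n → ℝ) := {z | ∀ k l : Fin n, k < l → z l < z k} with hSndef
    have hmp := (measurePreserving_piFinSuccAbove
      (fun _ : Fin (n+1) => (volume : Measure ℝ)) (Fin.last n)).symm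
    set e := MeasurableEquiv.piFinSuccAbove (fun _ : Fin (n+1) => ℝ) (Fin.last n) with hedef
    have hesymm : ∀ (p : ℝ × (Fin n → ℝ)), e.symm p = Fin.snoc p.2 p.1 := by
      intro p
      simp [hedef, MeasurableEquiv.piFinSuccAbove_symm_apply, Fin.insertNthEquiv,
        Fin.insertNth_last']
    have step1 : ∫⁻ y in S, f y =
        ∫⁻ p : ℝ × (Fin n → ℝ), S.indicator f (e.symm p)
          ∂((volume : Measure ℝ).prod (Measure.pi fun _ : Fin n => volume)) := by
      rw [← lintegral_indicator measurableSet_S, volume_pi,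
        ← hmp.lintegral_comp_emb (MeasurableEquiv.measurableEmbedding _)]
    set Gf : (Fin n → ℝ) → ℝ≥0∞ :=
      fun z => ENNReal.ofReal (∏ i : Fin n, gum (μ i.castSucc) (z i)) with hGfdef
    have step2 : ∀ (t : ℝ) (z : Fin n → ℝ),
        S.indicator f (Fin.snoc z t) =
          Sn.indicator Gf z *
            ({t' : ℝ | ∀ i, t' < z i}.indicator
              (fun t' => ENNReal.ofReal (gum μL t')) t) := by
      intro t z
      have hmem_iff : (Fin.snoc z t ∈ S) ↔ (z ∈ Sn ∧ ∀ i, t < z i) := snoc_mem_S z t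
      by_cases hz : z ∈ Sn
      · by_cases ht : ∀ i, t < z i
        · have h1 : Fin.snoc z t ∈ S := hmem_iff.2 ⟨hz, ht⟩
          have ht' : t ∈ {t' : ℝ | ∀ i, t' < z i} := ht
          rw [Set.indicator_of_mem h1 f, Set.indicator_of_mem hz Gf,
            Set.indicator_of_mem ht']
          have hprodsplit : (∏ j : Fin (n+1), gum (μ j) ((Fin.snoc z t : Fin (n+1) → ℝ) j))
              = (∏ i : Fin n, gum (μ i.castSucc) (z i)) * gum (μ (Fin.last n)) t := by
            rw [Fin.prod_univ_castSucc]
            simp [Fin.snoc_castSucc, Fin.snoc_last]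
          rw [hfdef, hGfdef]
          simp only []
          rw [hprodsplit,
            ENNReal.ofReal_mul (Finset.prod_nonneg fun i _ => gum_nonneg _ _ (hμ _).le)]
        · have h1 : Fin.snoc z t ∉ S := fun hmem => ht (hmem_iff.1 hmem).2
          have ht' : t ∉ {t' : ℝ | ∀ i, t' < z i} := ht
          rw [Set.indicator_of_notMem h1 f, Set.indicator_of_notMem ht', mul_zero]
      · have h1 : Fin.snoc z t ∉ S := fun hmem => hz (hmem_iff.1 hmem).1
        rw [Set.indicator_of_notMem h1 f, Set.indicator_of_notMem hz Gf, zero_mul]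
    have hTz : ∀ z : Fin n → ℝ, MeasurableSet {t' : ℝ | ∀ i, t' < z i} := by
      intro z
      have : {t' : ℝ | ∀ i, t' < z i} = ⋂ i, Set.Iio (z i) := by ext t'; simp
      rw [this]
      exact MeasurableSet.iInter fun i => measurableSet_Iio
    have hind_ne_top : ∀ z : Fin n → ℝ, Sn.indicator Gf z ≠ ⊤ := by
      intro z
      by_cases hz : z ∈ Sn <;> simp [hz, hGfdef, ENNReal.ofReal_ne_top]
    have step3 : ∀ z : Fin n → ℝ,
        (∫⁻ t, S.indicator f (e.symm (t, z)) ∂volume) =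
          Sn.indicator Gf z *
            ∫⁻ t in {t' : ℝ | ∀ i, t' < z i}, ENNReal.ofReal (gum μL t) := by
      intro z
      simp_rw [hesymm]
      simp only [step2]
      rw [lintegral_const_mul' _ _ (hind_ne_top z), lintegral_indicator (hTz z)]
    have hmeasprod : Measurable fun p : ℝ × (Fin n → ℝ) => S.indicator f (e.symm p) :=
      (hfmeas.indicator measurableSet_S).comp e.symm.measurable
    rw [step1, lintegral_prod_symm _ hmeasprod.aemeasurable]
    simp only [step3]
    have hindmul : ∀ z : Fin n → ℝ,
        Sn.indicator Gf z *
            (∫⁻ t in {t' : ℝ | ∀ i, t' < z i}, ENNReal.ofReal (gum μL t)) =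
          Sn.indicator (fun z => Gf z *
            ∫⁻ t in {t' : ℝ | ∀ i, t' < z i}, ENNReal.ofReal (gum μL t)) z := by
      intro z
      by_cases hz : z ∈ Sn <;> simp [hz]
    simp only [hindmul]
    rw [lintegral_indicator measurableSet_S, ← hSndef]
    rcases n with _ | k
    · -- n = 0
      have hSn : Sn = Set.univ := by
        ext z
        simp only [hSndef, Set.mem_setOf_eq, Set.mem_univ, iff_true]
        intro kk
        exact kk.elim0
      have hT : ∀ z : Fin 0 → ℝ, {t' : ℝ | ∀ i : Fin 0, t' < z i} = Set.univ := by
        intro z; ext t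
        simp only [Set.mem_setOf_eq, Set.mem_univ, iff_true]
        intro i; exact i.elim0
      have hone : ∀ z : Fin 0 → ℝ,
          Gf z * (∫⁻ t in {t' : ℝ | ∀ i, t' < z i}, ENNReal.ofReal (gum μL t)) = 1 := by
        intro z
        rw [hT z, Measure.restrict_univ, gum_lintegral_univ μL (hμ _), hGfdef]
        simp
      rw [hSn, Measure.restrict_univ]
      simp only [hone]
      rw [lintegral_one, Measure.pi_univ]
      have hRHS : (∏ j : Fin 1, μ j / ∑ j' ∈ Finset.Ici j, μ j') = 1 := by
        rw [Fin.prod_univ_one]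
        have h0 : (0 : Fin 1) = Fin.last 0 := rfl
        rw [h0, sum_Ici_last, div_self (hμ _).ne']
      rw [hRHS]
      simp
    · -- n = k + 1
      set upd := Function.update (fun i : Fin (k+1) => μ i.castSucc) (Fin.last k)
        (μ (Fin.last k).castSucc + μL) with hupddef
      have hupdpos : ∀ i, 0 < upd i := by
        intro i
        by_cases hi : i = Fin.last k
        · subst hi
          rw [hupddef, Function.update_self]
          exact add_pos (hμ _) (hμ _)
        · rw [hupddef, Function.update_of_ne hi]
          exact hμ _
      have hpref : (0:ℝ) ≤ μ (Fin.last k).castSucc / (μ (Fin.last k).castSucc + μL) :=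
        div_nonneg (hμ _).le (add_pos (hμ _) (hμ _)).le
      have hzcong : ∀ z ∈ Sn,
          Gf z * (∫⁻ t in {t' : ℝ | ∀ i, t' < z i}, ENNReal.ofReal (gum μL t))
            = ENNReal.ofReal (μ (Fin.last k).castSucc / (μ (Fin.last k).castSucc + μL)) *
              ENNReal.ofReal (∏ i, gum (upd i) (z i)) := by
        intro z hz
        have hTset : {t' : ℝ | ∀ i, t' < z i} = Set.Iio (z (Fin.last k)) := by
          ext t
          constructor
          · intro h; exact h (Fin.last k)
          · intro h i
            rcases eq_or_lt_of_le (Fin.le_last i) with hi | hi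
            · rw [show i = Fin.last k from hi]; exact h
            · exact lt_trans h (hz i (Fin.last k) hi)
        rw [hTset, gum_lintegral_Iio μL _ (hμ _), hGfdef]
        simp only []
        rw [← ENNReal.ofReal_mul (Finset.prod_nonneg fun i _ => gum_nonneg _ _ (hμ _).le),
          merge_prod k (fun i => μ i.castSucc) μL (fun i => hμ _) (hμ _) z,
          ENNReal.ofReal_mul hpref, hupddef]
      rw [setLIntegral_congr_fun measurableSet_S hzcong,
        lintegral_const_mul' _ _ ENNReal.ofReal_ne_top, ← volume_pi, ih upd hupdpos,
        ← ENNReal.ofReal_mul hpref, hupddef, hμLdef]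
      exact congrArg ENNReal.ofReal (PL_step k μ hμ)

/-- The probability that the ranking `π` is realized in a location-family random
utility model with noise densities `f j` and location parameters `θ j`. -/
noncomputable def rumProb {m : ℕ} (f : Fin m → ℝ → ℝ) (θ : Fin m → ℝ)
    (π : Equiv.Perm (Fin m)) : ℝ :=
  ∫ x in {x : Fin m → ℝ | ∀ k l : Fin m, k < l → x (π l) < x (π k)},
    ∏ j, f j (x j - θ j)

/-- The Gumbel location-family RUM with locations `θ j = log (lam j)` yields
exactly the Plackett-Luce ranking probabilities. -/
theorem stmt6 (m : ℕ) (lam : Fin m → ℝ) (hlam : ∀ j, 0 < lam j)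
    (π : Equiv.Perm (Fin m)) :
    rumProb (fun _ x => Real.exp (-x) * Real.exp (-Real.exp (-x)))
        (fun j => Real.log (lam j)) π =
      ∏ j : Fin m, lam (π j) / ∑ j' ∈ Finset.Ici j, lam (π j') := by
  unfold rumProb
  have hint_eq : ∀ x : Fin m → ℝ,
      (∏ j, Real.exp (-(x j - Real.log (lam j))) *
          Real.exp (-Real.exp (-(x j - Real.log (lam j)))))
        = ∏ j, gum (lam j) (x j) := by
    intro x
    refine Finset.prod_congr rfl fun j _ => ?_
    unfold gum
    rw [show -(x j - Real.log (lam j)) = Real.log (lam j) + -(x j) by ring, Real.exp_add,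
      Real.exp_log (hlam j)]
  simp only [hint_eq]
  set A : Set (Fin m → ℝ) := {x | ∀ k l : Fin m, k < l → x (π l) < x (π k)} with hA
  have hAmeas : MeasurableSet A := by
    have : A = ⋂ (k : Fin m) (l : Fin m) (_ : k < l), {x : Fin m → ℝ | x (π l) < x (π k)} := by
      ext x; simp [hA, Set.mem_iInter]
    rw [this]
    exact MeasurableSet.iInter fun k => MeasurableSet.iInter fun l => MeasurableSet.iInter
      fun _ => measurableSet_lt (measurable_pi_apply _) (measurable_pi_apply _)
  have hFmeas : Measurable fun x : Fin m → ℝ => ∏ j, gum (lam j) (x j) :=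
    Finset.measurable_prod _ fun j _ => (gum_cont (lam j)).measurable.comp (measurable_pi_apply j)
  have h1 : ∫ x in A, ∏ j, gum (lam j) (x j)
      = (∫⁻ x in A, ENNReal.ofReal (∏ j, gum (lam j) (x j))).toReal := by
    rw [integral_eq_lintegral_of_nonneg_ae
      (ae_of_all _ fun x => Finset.prod_nonneg fun j _ => gum_nonneg _ _ (hlam j).le)
      hFmeas.aestronglyMeasurable]
  rw [h1]
  set T := MeasurableEquiv.piCongrLeft (fun _ : Fin m => ℝ) π with hTdef
  have mpT : MeasurePreserving T volume volume :=
    volume_measurePreserving_piCongrLeft (fun _ : Fin m => ℝ) π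
  have hT : ∀ (y : Fin m → ℝ) (i : Fin m), T y i = y (π.symm i) := by
    intro y i
    have h := Equiv.piCongrLeft_apply_apply (fun _ : Fin m => ℝ) π y (π.symm i)
    rw [hTdef, MeasurableEquiv.coe_piCongrLeft]
    simpa using h
  set Sm : Set (Fin m → ℝ) := {y | ∀ k l : Fin m, k < l → y l < y k} with hSm
  have h2 : ∫⁻ x in A, ENNReal.ofReal (∏ j, gum (lam j) (x j))
      = ∫⁻ y in Sm, ENNReal.ofReal (∏ j, gum (lam (π j)) (y j)) := by
    rw [← lintegral_indicator hAmeas, ← lintegral_indicator measurableSet_S,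
      ← mpT.lintegral_comp_emb (MeasurableEquiv.measurableEmbedding _)]
    apply lintegral_congr
    intro y
    have hmemT : (T y ∈ A) ↔ (y ∈ Sm) := by
      simp only [hA, hSm, Set.mem_setOf_eq, hT, Equiv.symm_apply_apply]
    have hvalT : (∏ j, gum (lam j) (T y j)) = ∏ j, gum (lam (π j)) (y j) := by
      calc (∏ j, gum (lam j) (T y j)) = ∏ j, gum (lam j) (y (π.symm j)) := by
            exact Finset.prod_congr rfl fun j _ => by rw [hT]
        _ = ∏ j, gum (lam (π j)) (y (π.symm (π j))) := (Equiv.prod_comp π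
            (fun j => gum (lam j) (y (π.symm j)))).symm
        _ = ∏ j, gum (lam (π j)) (y j) := by simp
    by_cases hy : y ∈ Sm
    · rw [Set.indicator_of_mem (hmemT.2 hy), Set.indicator_of_mem hy, hvalT]
    · rw [Set.indicator_of_notMem (fun hmem => hy (hmemT.1 hmem)),
        Set.indicator_of_notMem hy]
  rw [h2, key_lintegral m (fun j => lam (π j)) (fun j => hlam _), ENNReal.toReal_ofReal]
  exact Finset.prod_nonneg fun j _ => div_nonneg (hlam _).le
    (Finset.sum_nonneg fun j' _ => (hlam _).le)
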